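/- Let X be a block concatenation subshift determined by alphabet A, lengths (n_k), and word sets (A_k). If for every k, every word of A_{k+1}, written as a concatenation of A_k-words, contains each word of A_k at least once, then X is minimal. -/

import Mathlib

open Filter Topology

/-- The left shift on bi-infinite sequences, as a bijection. -/
def shiftPerm (A : Type) : Equiv.Perm (ℤ → A) where
  toFun x n := x (n + 1)
  invFun x n := x (n - 1)
  left_inv x := funext fun n => by simp
  right_inv x := funext fun n => by simp

/-- A subshift: a closed, shift-invariant subset of the full shift. -/
def IsSubshift {A : Type} [TopologicalSpace A] (X : Set (ℤ → A)) : Prop :=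
  IsClosed X ∧ (shiftPerm A) '' X = X

/-- The word `w` occurs in some point of `X`. -/
def WordIn {A : Type} (X : Set (ℤ → A)) (w : List A) : Prop :=
  ∃ x ∈ X, ∃ i : ℤ, ∀ j : Fin w.length, x (i + ((j : ℕ) : ℤ)) = w.get j

/-- The language of `X`. -/
def language {A : Type} (X : Set (ℤ → A)) : Set (List A) :=
  {w | WordIn X w}

/-- The word complexity function `c_n(X)`: the number of `n`-letter words of `X`. -/
noncomputable def complexity {A : Type} (X : Set (ℤ → A)) (n : ℕ) : ℕ :=
  Nat.card {w : List A // w.length = n ∧ w ∈ language X}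

/-- Minimality: every word of the language occurs in every point of `X`. -/
def IsMinimalSubshift {A : Type} (X : Set (ℤ → A)) : Prop :=
  ∀ w ∈ language X, ∀ x ∈ X, ∃ i : ℤ, ∀ j : Fin w.length, x (i + ((j : ℕ) : ℤ)) = w.get j


/-- Combining decompositions: if every entry of `L'` is a flatten of a list of
words from `T`, so is `L'.flatten`. -/
lemma flatten_of_forall {A : Type} (T : Set (List A)) :
    ∀ L' : List (List A),
      (∀ e ∈ L', ∃ Le : List (List A), (∀ x ∈ Le, x ∈ T) ∧ e = Le.flatten) →
      ∃ L : List (List A), (∀ x ∈ L, x ∈ T) ∧ L'.flatten = L.flatten := by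
  intro L'
  induction L' with
  | nil => intro _; exact ⟨[], by simp, by simp⟩
  | cons a L' ih =>
    intro h
    obtain ⟨La, hLa, ha⟩ := h a (by simp)
    obtain ⟨L, hL, hflat⟩ := ih fun e he => h e (by simp [he])
    refine ⟨La ++ L, ?_, ?_⟩
    · intro x hx; rcases List.mem_append.1 hx with hx | hx
      · exact hLa x hx
      · exact hL x hx
    · simp [ha, hflat]

/-- In a concatenation of blocks of equal length `n ≥ 1`, any infix of length
at least `2n - 1` contains a whole block. -/
lemma block_find {A : Type} (n : ℕ) (hn : 1 ≤ n) :
    ∀ (L : List (List A)) (s : List A), (∀ e ∈ L, e.length = n) →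
      s <:+: L.flatten → 2 * n - 1 ≤ s.length → ∃ e ∈ L, e <:+: s := by
  intro L
  induction L with
  | nil =>
    intro s _ hs hlen
    rw [List.flatten_nil, List.infix_nil] at hs
    subst hs; simp at hlen; omega
  | cons a L ih =>
    intro s hL hs hlen
    obtain ⟨p, q, hpq⟩ := hs
    rw [List.append_assoc] at hpq
    have halen : a.length = n := hL a (by simp)
    have hda : a.drop n = [] := by rw [← halen]; exact List.drop_length
    by_cases hp : n ≤ p.length
    · -- s is an infix of L.flatten
      have h2 := congrArg (List.drop n) hpq
      simp only [List.flatten_cons, List.drop_append, hda, halen,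
        Nat.sub_self, List.drop_zero, List.nil_append, Nat.sub_eq_zero_of_le hp,
        Nat.zero_sub] at h2
      obtain ⟨e, he, hinf⟩ := ih s (fun e he => hL e (by simp [he]))
        ⟨p.drop n, q, by rw [List.append_assoc]; exact h2⟩ hlen
      exact ⟨e, by simp [he], hinf⟩
    · push_neg at hp
      have hdp : p.drop n = [] := List.drop_eq_nil_of_le (le_of_lt hp)
      by_cases hp0 : p.length = 0
      · -- the first block a is inside s
        have hpnil : p = [] := List.length_eq_zero_iff.1 hp0
        subst hpnil
        rw [List.nil_append] at hpq
        have hapre : a <+: s ++ q := ⟨L.flatten, by rw [hpq]; simp⟩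
        have haS : a <+: s :=
          List.prefix_of_prefix_length_le hapre (List.prefix_append s q) (by omega)
        exact ⟨a, by simp, haS.isInfix⟩
      · -- the second block is inside s
        have hp1 : 1 ≤ p.length := by omega
        cases L with
        | nil =>
          exfalso
          have := congrArg List.length hpq
          simp at this
          omega
        | cons b L' =>
          have hblen : b.length = n := hL b (by simp)
          have hsub : n - p.length - s.length = 0 := by omega
          have h2 := congrArg (List.drop n) hpq
          simp only [List.flatten_cons, List.drop_append, hda, halen,
            Nat.sub_self, List.drop_zero, List.nil_append, hdp, hsub,
            Nat.zero_sub] at h2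
          -- h2 : s.drop (n - p.length) ++ q = b ++ L'.flatten
          have hbpre : b <+: s.drop (n - p.length) ++ q := ⟨L'.flatten, h2.symm⟩
          have hbS : b <+: s.drop (n - p.length) :=
            List.prefix_of_prefix_length_le hbpre
              (List.prefix_append _ q) (by simp [hblen]; omega)
          exact ⟨b, by simp, hbS.isInfix.trans (List.drop_suffix _ s).isInfix⟩


/-- A block concatenation subshift in which every `A_{k+1}`-word,
written as a concatenation of `A_k`-words, contains each `A_k`-word at least once,
is minimal. -/
theorem blockConcat_minimal
    {A : Type} [Finite A]
    (nk : ℕ → ℕ) (Ak : ℕ → Set (List A))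
    (h1 : nk 1 = 1)
    (hdiv : ∀ k, 1 ≤ k → nk k ∣ nk (k + 1))
    (hA1 : Ak 1 = {w : List A | w.length = 1})
    (hlen : ∀ k, 1 ≤ k → ∀ w ∈ Ak k, w.length = nk k)
    (hconcat : ∀ k, 1 ≤ k → ∀ w ∈ Ak (k + 1), ∃ L : List (List A),
      (∀ u ∈ L, u ∈ Ak k) ∧ w = L.flatten ∧ ∀ v ∈ Ak k, v ∈ L)
    (X : Set (ℤ → A))
    (hXdef : X = {x : ℤ → A | ∀ (i : ℤ) (m : ℕ), ∃ k, 1 ≤ k ∧ ∃ w ∈ Ak k,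
      (List.ofFn fun j : Fin m => x (i + ((j : ℕ) : ℤ))) <:+: w}) :
    IsMinimalSubshift X := by
  subst hXdef
  rintro w ⟨x, hxX, i, hxi⟩ y hy
  -- trivial case: the empty word
  rcases Nat.eq_zero_or_pos w.length with hw0 | hw1
  · exact ⟨0, fun j => absurd j.isLt (by omega)⟩
  -- the word w is an infix of some word u ∈ Ak k
  have hofn : (List.ofFn fun j : Fin w.length => x (i + ((j : ℕ) : ℤ))) = w := by
    conv_rhs => rw [← List.ofFn_get w]
    exact congrArg List.ofFn (funext fun j => hxi j)
  obtain ⟨k, hk1, u, huk, hwu⟩ := hxX i w.length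
  rw [hofn] at hwu
  have hulen : u.length = nk k := hlen k hk1 u huk
  have hnk1 : 1 ≤ nk k := by
    have := hwu.length_le; omega
  -- choose a long window in y
  set N := (Finset.range (k + 2)).sup nk with hN
  set m := N + 2 * nk (k + 1) + 1 with hm
  obtain ⟨j, hj1, v, hvj, hsv⟩ := hy 0 m
  set s := (List.ofFn fun t : Fin m => y (0 + ((t : ℕ) : ℤ))) with hs
  have hslen : s.length = m := by simp [hs, hm]
  have hvlen : v.length = nk j := hlen j hj1 v hvj
  have hmnj : m ≤ nk j := by
    have := hsv.length_le; omega
  have hjk : k + 2 ≤ j := by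
    by_contra hc
    push_neg at hc
    have : nk j ≤ N := Finset.le_sup (Finset.mem_range.2 (by omega))
    omega
  -- every word of Ak (k+1+d) is a concatenation of words of Ak (k+1)
  have hdec : ∀ d, ∀ v' ∈ Ak (k + 1 + d), ∃ L : List (List A),
      (∀ e ∈ L, e ∈ Ak (k + 1)) ∧ v' = L.flatten := by
    intro d
    induction d with
    | zero => intro v' hv'; exact ⟨[v'], by simpa using hv', by simp⟩
    | succ d ih =>
      intro v' hv'
      obtain ⟨L', hL'mem, hflat, -⟩ := hconcat (k + 1 + d) (by omega) v' hv'
      obtain ⟨L, hLmem, hLflat⟩ := flatten_of_forall (Ak (k + 1)) L'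
        (fun e he => ih e (hL'mem e he))
      exact ⟨L, hLmem, by rw [hflat, hLflat]⟩
  have hjeq : k + 1 + (j - (k + 1)) = j := by omega
  obtain ⟨L, hLmem, hvL⟩ := hdec (j - (k + 1)) v (by rw [hjeq]; exact hvj)
  have hLlens : ∀ e ∈ L, e.length = nk (k + 1) :=
    fun e he => hlen (k + 1) (by omega) e (hLmem e he)
  -- nk (k+1) is positive
  have hnk1' : 1 ≤ nk (k + 1) := by
    by_contra hc
    push_neg at hc
    have hv0 : v.length = 0 := by
      rw [hvL, List.length_flatten]
      refine List.sum_eq_zero ?_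
      intro z hz
      obtain ⟨e, he, rfl⟩ := List.mem_map.1 hz
      have := hLlens e he; omega
    omega
  -- find a whole Ak (k+1) block inside s
  obtain ⟨e, heL, hes⟩ := block_find (nk (k + 1)) hnk1' L s hLlens
    (hvL ▸ hsv) (by omega)
  -- u occurs in e, hence w occurs in s
  obtain ⟨Le, hLemem, hLeflat, hLeall⟩ := hconcat k hk1 e (hLmem e heL)
  have hue : u <:+: e := hLeflat ▸ List.infix_of_mem_flatten (hLeall u huk)
  have hws : w <:+: s := hwu.trans (hue.trans hes)
  -- extract the occurrence
  obtain ⟨p, q, hpq⟩ := hws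
  refine ⟨0 + (p.length : ℤ), fun t => ?_⟩
  have hlens : p.length + w.length + q.length = m := by
    have := congrArg List.length hpq
    simp [hslen] at this
    omega
  have hidx : p.length + (t : ℕ) < m := by have := t.isLt; omega
  have h4 : s[(p.length + (t : ℕ))]? = some (w.get t) := by
    rw [← hpq, List.append_assoc, List.getElem?_append_right (by omega),
      Nat.add_sub_cancel_left, List.getElem?_append_left t.isLt,
      List.getElem?_eq_getElem t.isLt, List.get_eq_getElem]
  have h5 : s[(p.length + (t : ℕ))]? = some (y (0 + ((p.length + (t : ℕ) : ℕ) : ℤ))) := by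
    rw [hs, List.getElem?_ofFn]
    simp [List.ofFnNthVal, hidx]
  have h6 := h4.symm.trans h5
  have h7 := Option.some.inj h6
  rw [h7]
  congr 1
  push_cast
  ring
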